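/- Let p = 5r + 2 be an odd prime (so r is odd or r = 0) and ξ ∈ k \ F_p with k algebraically closed of characteristic p. Then the coefficients of x^{p-1} in x^{2r}((x-1)(x-ξ))^{2r} and in x^{2r+1}((x-1)(x-ξ))^{2r} are not both zero. -/

import Mathlib

open Polynomial

/-- `p = 5r + 2` an odd prime (so `r` is odd or `r = 0`), `k` algebraically
closed of characteristic `p`, `ξ ∈ k ∖ 𝔽_p`.  The coefficients of `x^{p-1}` in
`x^{2r}((x-1)(x-ξ))^{2r}` and in `x^{2r+1}((x-1)(x-ξ))^{2r}` are not both zero. -/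
theorem stmt15 {k : Type*} [Field k] [IsAlgClosed k] (p r : ℕ) [Fact p.Prime] [CharP k p]
    (hp : p = 5 * r + 2) (hodd : Odd p)
    (ξ : k) (hξ : ∀ c : ℕ, ξ ≠ (c : k)) :
    ¬ ((X ^ (2 * r) * ((X - 1) * (X - C ξ)) ^ (2 * r) : k[X]).coeff (p - 1) = 0 ∧
       (X ^ (2 * r + 1) * ((X - 1) * (X - C ξ)) ^ (2 * r) : k[X]).coeff (p - 1) = 0) := by
  rintro ⟨h1, h2⟩
  have hξ0 : ξ ≠ 0 := by simpa using hξ 0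
  have hr : 1 ≤ r := by
    rcases Nat.eq_zero_or_pos r with h | h
    · exfalso; rw [hp, h] at hodd; have := Nat.odd_iff.mp hodd; omega
    · exact h
  set g : k[X] := ((X - 1) * (X - C ξ)) ^ (2 * r) with hgdef
  set a : k := -(1 + ξ) with hadef
  -- extract the two coefficient hypotheses
  rw [show p - 1 = 3 * r + 1 + 2 * r by omega, coeff_X_pow_mul] at h1
  rw [show p - 1 = 3 * r + (2 * r + 1) by omega, coeff_X_pow_mul] at h2
  have hCa : (C a : k[X]) = -(1 + C ξ) := by simp [hadef]
  have hh : ((X : k[X]) - 1) * (X - C ξ) = X ^ 2 + C a * X + C ξ := by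
    rw [hCa]; ring
  have hdh : derivative (X ^ 2 + C a * X + C ξ : k[X]) = C 2 * X + C a := by
    simp [derivative_X_pow]
    rw [← C_1, ← C_add]; norm_num
  have hE : (X ^ 2 + C a * X + C ξ) * derivative g
      = C ((2 * r : ℕ) : k) * (C 2 * X + C a) * g := by
    rw [hgdef, derivative_pow, ← hh]
    have h2r : 2 * r - 1 + 1 = 2 * r := by omega
    calc ((X:k[X]) - 1) * (X - C ξ) * (C ((2*r : ℕ):k) * ((X - 1) * (X - C ξ)) ^ (2*r-1)
            * derivative ((X - 1) * (X - C ξ)))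
        = C ((2*r : ℕ):k) * derivative ((X - 1) * (X - C ξ))
            * (((X - 1) * (X - C ξ)) ^ (2*r-1) * ((X - 1) * (X - C ξ))) := by ring
      _ = _ := by rw [← pow_succ, h2r, hh, hdh]
  -- the three-term recurrence
  have rel : ∀ n : ℕ,
      g.coeff (n+1) * ((n:k)+1) + a * (g.coeff (n+2) * ((n:k)+2))
        + ξ * (g.coeff (n+3) * ((n:k)+3))
      = ((2*r : ℕ):k) * (2 * g.coeff (n+1) + a * g.coeff (n+2)) := by
    intro n
    have := congrArg (fun q : k[X] => q.coeff (n+2)) hE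
    rw [show (X ^ 2 + C a * X + C ξ) * derivative g
          = X ^ 2 * derivative g + C a * (X * derivative g) + C ξ * derivative g by ring,
        show (C ((2*r : ℕ):k) * (C 2 * X + C a) * g : k[X])
          = C ((2*r : ℕ):k) * (C 2 * (X * g) + C a * g) by ring] at this
    rw [coeff_add, coeff_add, coeff_X_pow_mul, coeff_C_mul, coeff_C_mul,
        show n + 2 = (n+1) + 1 from rfl, coeff_X_mul, coeff_C_mul, coeff_add,
        coeff_C_mul, coeff_C_mul, coeff_X_mul] at this
    rw [coeff_derivative, coeff_derivative, coeff_derivative] at this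
    push_cast at this
    convert this using 3 <;> push_cast <;> ring_nf
  -- propagate vanishing
  have key : ∀ j, j ≤ r → g.coeff (3*r + j) = 0 ∧ g.coeff (3*r + j + 1) = 0 := by
    intro j
    induction j with
    | zero => intro _; exact ⟨h2, h1⟩
    | succ j ih =>
      intro hjr
      obtain ⟨c0, c1⟩ := ih (by omega)
      obtain ⟨n, hn⟩ : ∃ n, 3*r + j = n + 1 := ⟨3*r + j - 1, by omega⟩
      have hrel := rel n
      rw [← hn, show n + 2 = 3*r + j + 1 by omega, show n + 3 = 3*r + j + 2 by omega,
          c0, c1] at hrel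
      have hcast : ((n:k) + 3) ≠ 0 := by
        have : ((n + 3 : ℕ) : k) ≠ 0 := by
          rw [Ne, CharP.cast_eq_zero_iff k p]
          intro hdvd
          have := Nat.le_of_dvd (by omega) hdvd
          omega
        push_cast at this
        exact this
      have : g.coeff (3*r + j + 2) = 0 := by
        have h0 : ξ * (g.coeff (3*r + j + 2) * ((n:k) + 3)) = 0 := by
          linear_combination hrel
        rcases mul_eq_zero.mp h0 with h | h
        · exact absurd h hξ0
        rcases mul_eq_zero.mp h with h | h
        · exact h
        · exact absurd h hcast
      exact ⟨by rw [show 3*r + (j+1) = 3*r + j + 1 from rfl]; exact c1,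
             by rw [show 3*r + (j+1) + 1 = 3*r + j + 2 from rfl]; exact this⟩
  have hlead := (key r le_rfl).1
  -- but the leading coefficient of g is 1
  have hmonic : g.Monic := by
    rw [hgdef]
    rw [show ((X : k[X]) - 1) = X - C 1 by rw [map_one]]
    exact ((monic_X_sub_C (1:k)).mul (monic_X_sub_C ξ)).pow _
  have hdeg : g.natDegree = 4 * r := by
    rw [hgdef, natDegree_pow]
    have : (((X : k[X]) - 1) * (X - C ξ)).natDegree = 2 := by
      rw [show ((X : k[X]) - 1) = X - C 1 by rw [map_one]]
      rw [natDegree_mul (X_sub_C_ne_zero 1) (X_sub_C_ne_zero ξ),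
          natDegree_X_sub_C, natDegree_X_sub_C]
    rw [this]; ring
  have : (1 : k) = 0 := by
    have := hmonic.coeff_natDegree
    rw [hdeg, show 4 * r = 3*r + r by ring] at this
    rw [hlead] at this
    exact this.symm
  exact one_ne_zero this
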